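/- With Ω symmetric with zero diagonal, h(v) = (1/2)vᵀΩv, and Q_i = I + D_iΩ, for every v one has h(Q_i v) ≥ h(v), with equality if and only if Q_i v = v. -/

import Mathlib

open Matrix

theorem stmt3 {n : ℕ} (Ω : Matrix (Fin n) (Fin n) ℝ) (hsymm : Ωᵀ = Ω)
    (hdiag : ∀ i, Ω i i = 0) (i : Fin n) (v : Fin n → ℝ) :
    let Q : Matrix (Fin n) (Fin n) ℝ := 1 + single i i 1 * Ω
    let h : (Fin n → ℝ) → ℝ := fun w => (1/2) * (w ⬝ᵥ (Ω *ᵥ w))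
    h (Q *ᵥ v) ≥ h v ∧ (h (Q *ᵥ v) = h v ↔ Q *ᵥ v = v) := by
  intro Q h
  set c : ℝ := (Ω *ᵥ v) i with hc
  have hQv : Q *ᵥ v = v + Pi.single i c := by
    ext j
    simp only [Q, Matrix.add_mulVec, Matrix.one_mulVec, ← Matrix.mulVec_mulVec,
      Pi.add_apply]
    congr 1
    by_cases hj : j = i
    · subst hj
      simp [Matrix.mulVec, dotProduct, Matrix.single, Pi.single_apply,
        ite_mul, hc]
    · simp [Matrix.mulVec, dotProduct, Matrix.single, Pi.single_apply,
        ite_mul, hc, hj, Ne.symm hj]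
  have key : v ⬝ᵥ Ω *ᵥ Pi.single i c = c * c := by
    rw [Matrix.dotProduct_mulVec]
    have : Ω.vecMul v = Ω *ᵥ v := by
      conv_lhs => rw [← hsymm]
      rw [Matrix.vecMul_transpose]
    simp [this, dotProduct_single, hc, mul_comm]
  have key2 : Pi.single i c ⬝ᵥ Ω *ᵥ v = c * c := by
    simp [single_dotProduct, hc, mul_comm]
  have key3 : Pi.single i c ⬝ᵥ Ω *ᵥ Pi.single i c = 0 := by
    rw [Matrix.dotProduct_mulVec]
    have : (Ω.vecMul (Pi.single i c)) = fun j => c * Ω i j := by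
      ext j; simp [Matrix.vecMul, single_dotProduct]
    simp [this, dotProduct_single, hdiag]
  have hval : h (Q *ᵥ v) = h v + c * c := by
    simp only [h, hQv, Matrix.mulVec_add, dotProduct_add,
      add_dotProduct, key, key2, key3]
    ring
  constructor
  · rw [hval]; nlinarith [mul_self_nonneg c]
  · constructor
    · intro he
      have hc0 : c = 0 := by nlinarith [hval, mul_self_nonneg c]
      rw [hQv, hc0]
      simp
    · intro he
      have : v + Pi.single i c = v := by rw [← hQv, he]
      have hc0 : c = 0 := by
        have := congrFun this i
        simpa using this
      rw [hval, hc0]; ring
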